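/- Let Γ be a connected graph. For each edge e define u_e = {(x,y) : d(x,e) + d(y,e) ≥ d(x,y)} where d is the graph metric (the set of pairs such that no geodesic between them passes through e). Suppose U is a uniformity on the vertex set Γ⁰ contained in the filter generated by {u_e : e ∈ Γ¹} (a 'visibility'). Then U is precompact: for every entourage v ∈ U, the vertex set Γ⁰ is a union of finitely many v-small sets. -/

import Mathlib

open Uniformity

/-- For an edge `{a, b}` of `Γ`, the set of pairs of vertices such that no geodesic joining
them passes through the edge: `u_e = {(x,y) : d(x,e) + d(y,e) ≥ d(x,y)}`. -/
def visSet {M : Type*} (Γ : SimpleGraph M) (a b : M) : Set (M × M) :=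
  {p | Γ.dist p.1 p.2 ≤ min (Γ.dist p.1 a) (Γ.dist p.1 b) + min (Γ.dist p.2 a) (Γ.dist p.2 b)}

/-- The visibility filter of a graph, generated by the sets `u_e` over all edges `e`. -/
def visFilter {M : Type*} (Γ : SimpleGraph M) : Filter (M × M) :=
  Filter.generate {s | ∃ a b : M, Γ.Adj a b ∧ s = visSet Γ a b}

/-- Every visibility uniformity on a connected graph is precompact: for every entourage `v`,
the vertex set is a union of finitely many `v`-small sets. -/
theorem visibility_precompact {M : Type*} (Γ : SimpleGraph M) (hconn : Γ.Connected)
    (U : Filter (M × M))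
    (hrefl : ∀ s ∈ U, (SetRel.id : Set (M × M)) ⊆ s)
    (hsymm : ∀ s ∈ U, Prod.swap ⁻¹' s ∈ U)
    (hcomp : ∀ s ∈ U, ∃ t ∈ U, SetRel.comp t t ⊆ s)
    (hvis : ∀ s ∈ U, s ∈ visFilter Γ) :
    ∀ v ∈ U, ∃ c : Finset (Set M),
      (∀ m ∈ c, ∀ x ∈ m, ∀ y ∈ m, x = y ∨ (x, y) ∈ v) ∧ ⋃₀ (c : Set (Set M)) = Set.univ := by
  classical
  have hne : Nonempty M := hconn.nonempty
  intro v hv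
  obtain ⟨t, ht, htv⟩ := hcomp v hv
  set t' : Set (M × M) := t ∩ Prod.swap ⁻¹' t with ht'def
  have ht' : t' ∈ U := Filter.inter_mem ht (hsymm t ht)
  obtain ⟨S, hSsub, hSfin, hSt⟩ := Filter.mem_generate_iff.mp (hvis t' ht')
  rcases S.eq_empty_or_nonempty with rfl | ⟨s0, hs0⟩
  · -- trivial case: `t'` is everything
    have hall : ∀ p : M × M, p ∈ t' := fun p => hSt (by simp)
    refine ⟨{Set.univ}, ?_, by simp⟩
    intro m hm x hx y hy
    simp only [Finset.mem_singleton] at hm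
    exact Or.inr (htv ⟨y, (hall (x, y)).1, (hall (y, y)).1⟩)
  · have hSsub' : ∀ s, s ∈ S → ∃ a b : M, Γ.Adj a b ∧ s = visSet Γ a b := fun s hs => hSsub hs
    choose! a b hab hEq using hSsub'
    set F : Finset M := hSfin.toFinset.image a ∪ hSfin.toFinset.image b with hF
    have hFne : F.Nonempty := by
      refine ⟨a s0, ?_⟩
      simp only [hF, Finset.mem_union, Finset.mem_image, Set.Finite.mem_toFinset]
      exact Or.inl ⟨s0, hs0, rfl⟩
    refine ⟨F.image (fun f => {x | (x, f) ∈ t'}), ?_, ?_⟩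
    · intro m hm x hx y hy
      simp only [Finset.mem_image] at hm
      obtain ⟨f, hf, rfl⟩ := hm
      exact Or.inr (htv ⟨f, hx.1, hy.2⟩)
    · apply Set.eq_univ_of_forall
      intro x
      obtain ⟨f, hfF, hfmin⟩ := Finset.exists_min_image F (fun f => Γ.dist x f) hFne
      refine Set.mem_sUnion.mpr ⟨{z | (z, f) ∈ t'}, by
        simp only [Finset.coe_image, Set.mem_image, Finset.mem_coe]
        exact ⟨f, hfF, rfl⟩, ?_⟩
      have key : (x, f) ∈ ⋂₀ S := by
        intro s hs
        rw [hEq s hs]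
        have haF : a s ∈ F := by
          simp only [hF, Finset.mem_union, Finset.mem_image, Set.Finite.mem_toFinset]
          exact Or.inl ⟨s, hs, rfl⟩
        have hbF : b s ∈ F := by
          simp only [hF, Finset.mem_union, Finset.mem_image, Set.Finite.mem_toFinset]
          exact Or.inr ⟨s, hs, rfl⟩
        have h1 : Γ.dist x f ≤ Γ.dist x (a s) := hfmin _ haF
        have h2 : Γ.dist x f ≤ Γ.dist x (b s) := hfmin _ hbF
        exact le_trans (le_min h1 h2) (Nat.le_add_right _ _)
      exact hSt key
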